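/- arXiv:2002.11604 — 2 statements merged into one kernel-verified Lean document; each statement's English description precedes it below -/
import Mathlib

section
/- Let P be a finite ordered set having an autonomous subset A which is an antichain with |A| ≥ 2. Then for any pair (x, y) of distinct elements of A, exactly half of the greedy linear extensions of P put x before y; in particular (x, y) is a 1/2-greedy balanced pair. -/
variable {α : Type*}

/-- `x` is a minimal element of the subposet induced on the finite set `s`. -/
def IsMinimalIn [PartialOrder α] (s : Finset α) (x : α) : Prop :=
  x ∈ s ∧ ∀ y ∈ s, ¬ y < x

/-- A valid greedy choice of the next element, given the previously chosen element `p`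
(`none` at the start) and the set `s` of not-yet-chosen elements: the next element must
be minimal among the remaining elements and, moreover, if some element strictly above `p`
is minimal among the remaining elements, then the next element must be strictly above `p`
(i.e. it is a minimal element of `U(p)` that can extend the linear extension). -/
def GreedyNext [PartialOrder α] (p : Option α) (s : Finset α) (x : α) : Prop :=
  IsMinimalIn s x ∧
    ∀ q : α, p = some q → (∃ v ∈ s, q < v ∧ IsMinimalIn s v) → q < x

/-- The list is a valid greedy enumeration of the finite set `s`, the previously chosen
element being `p` (`none` at the start). -/
def GreedyFrom [PartialOrder α] [DecidableEq α] :
    Option α → Finset α → List α → Prop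
  | _, s, [] => s = ∅
  | p, s, x :: l => GreedyNext p s x ∧ GreedyFrom (some x) (s.erase x) l

/-- `l` is a greedy linear extension of the finite poset `α`, presented as the list of
its elements in increasing order. -/
def IsGreedyLE [PartialOrder α] [DecidableEq α] [Fintype α] (l : List α) : Prop :=
  GreedyFrom (none : Option α) Finset.univ l

/-- `A` is an autonomous subset of the poset. -/
def IsAutonomous [PartialOrder α] (A : Set α) : Prop :=
  ∀ v ∉ A, ∀ a ∈ A, ∀ a' ∈ A, (v < a → v < a') ∧ (a < v → a' < v)

section Aux

variable [PartialOrder α] [DecidableEq α]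
set_option linter.unusedSectionVars false

lemma indexOf_map_of_injective {f : α → α} (hf : Function.Injective f) :
    ∀ (l : List α) (a : α), (l.map f).idxOf (f a) = l.idxOf a := by
  intro l a
  induction l with
  | nil => simp
  | cons b t ih =>
    by_cases h : b = a
    · subst h; simp [List.idxOf_cons_self]
    · rw [List.map_cons, List.idxOf_cons_ne _ (fun hc => h (hf hc)),
        List.idxOf_cons_ne _ h, ih]

lemma isMinimalIn_image (σ : α ≃ α) (hσ : ∀ a b : α, σ a < σ b ↔ a < b)
    (s : Finset α) (x : α) : IsMinimalIn (s.image σ) (σ x) ↔ IsMinimalIn s x := by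
  unfold IsMinimalIn
  constructor
  · rintro ⟨hx, hmin⟩
    refine ⟨?_, fun y hy hlt => hmin (σ y) (Finset.mem_image_of_mem _ hy) ((hσ y x).mpr hlt)⟩
    obtain ⟨z, hz, hzx⟩ := Finset.mem_image.mp hx
    rwa [σ.injective hzx] at hz
  · rintro ⟨hx, hmin⟩
    refine ⟨Finset.mem_image_of_mem _ hx, ?_⟩
    rintro y hy hlt
    obtain ⟨z, hz, rfl⟩ := Finset.mem_image.mp hy
    exact hmin z hz ((hσ z x).mp hlt)

lemma greedyFrom_map (σ : α ≃ α) (hσ : ∀ a b : α, σ a < σ b ↔ a < b) :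
    ∀ (l : List α) (p : Option α) (s : Finset α), GreedyFrom p s l →
      GreedyFrom (p.map σ) (s.image σ) (l.map σ) := by
  intro l
  induction l with
  | nil => intro p s h; simp only [GreedyFrom] at h ⊢; simp [h, GreedyFrom]
  | cons x t ih =>
    rintro p s ⟨⟨hminx, hnext⟩, hrest⟩
    refine ⟨⟨(isMinimalIn_image σ hσ s x).mpr hminx, ?_⟩, ?_⟩
    · rintro q hq ⟨v, hv, hqv, hvmin⟩
      obtain ⟨q', rfl⟩ : ∃ q', p = some q' := by
        cases p with
        | none => simp at hq
        | some q' => exact ⟨q', rfl⟩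
      have hq' : q = σ q' := by simpa using hq.symm
      obtain ⟨w, hw, rfl⟩ := Finset.mem_image.mp hv
      subst hq'
      rw [hσ]
      exact hnext q' rfl ⟨w, hw, (hσ q' w).mp hqv, (isMinimalIn_image σ hσ s w).mp hvmin⟩
    · have := ih (some x) (s.erase x) hrest
      rwa [show (s.erase x).image σ = (s.image σ).erase (σ x) from ?_] at this
      ext z
      simp only [Finset.mem_image, Finset.mem_erase]
      constructor
      · rintro ⟨w, ⟨hwne, hws⟩, rfl⟩
        exact ⟨fun hc => hwne (σ.injective hc), ⟨w, hws, rfl⟩⟩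
      · rintro ⟨hne, w, hws, rfl⟩
        exact ⟨w, ⟨fun hc => hne (by rw [hc]), hws⟩, rfl⟩

lemma greedyFrom_nodup_toFinset :
    ∀ (l : List α) (p : Option α) (s : Finset α), GreedyFrom p s l →
      l.Nodup ∧ l.toFinset = s := by
  intro l
  induction l with
  | nil => intro p s h; simp only [GreedyFrom] at h; simp [h]
  | cons x t ih =>
    rintro p s ⟨⟨⟨hxs, _⟩, _⟩, hrest⟩
    obtain ⟨hnd, htf⟩ := ih (some x) (s.erase x) hrest
    constructor
    · refine List.nodup_cons.mpr ⟨fun hc => ?_, hnd⟩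
      have : x ∈ s.erase x := htf ▸ List.mem_toFinset.mpr hc
      exact (Finset.mem_erase.mp this).1 rfl
    · simp [List.toFinset_cons, htf, Finset.insert_erase hxs]

end Aux

/-- If a finite ordered set has an autonomous subset `A` which is an antichain with at
least two elements, then for any two distinct elements `x, y` of `A` exactly half of the
greedy linear extensions put `x` before `y`; in particular `(x, y)` is a `1/2`-greedy
balanced pair. -/
theorem autonomous_antichain_half [Fintype α] [DecidableEq α] [PartialOrder α]
    (A : Set α) (hauto : IsAutonomous A) (hanti : IsAntichain (· ≤ ·) A)
    (hcard : 2 ≤ A.ncard) :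
    ∀ x ∈ A, ∀ y ∈ A, x ≠ y →
      2 * {l : List α | IsGreedyLE l ∧ l.idxOf x < l.idxOf y}.ncard
        = {l : List α | IsGreedyLE l}.ncard := by
  intro x hx y hy hxy
  set σ : α ≃ α := Equiv.swap x y with hσdef
  -- σ is an order automorphism
  have hmono : ∀ a b : α, a < b → σ a < σ b := by
    intro a b hab
    have hincomp : ¬ x < y ∧ ¬ y < x :=
      ⟨fun h => hanti hx hy hxy h.le, fun h => hanti hy hx hxy.symm h.le⟩
    have key : ∀ c ∈ A, ∀ d, c < d → d ∉ A := by
      intro c hc d hcd hdA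
      exact hanti hc hdA (fun h => lt_irrefl c (h ▸ hcd)) hcd.le
    have key' : ∀ c ∈ A, ∀ d, d < c → d ∉ A := by
      intro c hc d hdc hdA
      exact hanti hdA hc (fun h => lt_irrefl c (h ▸ hdc)) hdc.le
    by_cases ha : a = x
    · have hxb : x < b := ha ▸ hab
      by_cases hb : b = y
      · exact absurd (hb ▸ hxb) hincomp.1
      · have hbA : b ∉ A := key x hx b hxb
        have hbx : b ≠ x := fun h => lt_irrefl x (h ▸ hxb)
        rw [ha, hσdef]
        simp only [Equiv.swap_apply_left, Equiv.swap_apply_of_ne_of_ne hbx hb]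
        exact ((hauto b hbA x hx y hy).2 hxb)
    · by_cases ha' : a = y
      · have hyb : y < b := ha' ▸ hab
        by_cases hb : b = x
        · exact absurd (hb ▸ hyb) hincomp.2
        · have hbA : b ∉ A := key y hy b hyb
          have hby : b ≠ y := fun h => lt_irrefl y (h ▸ hyb)
          rw [ha', hσdef]
          simp only [Equiv.swap_apply_right, Equiv.swap_apply_of_ne_of_ne hb hby]
          exact ((hauto b hbA y hy x hx).2 hyb)
      · -- a ∉ {x, y}
        rw [hσdef]
        rw [Equiv.swap_apply_of_ne_of_ne ha ha']
        by_cases hb : b = x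
        · have hax : a < x := hb ▸ hab
          have haA : a ∉ A := key' x hx a hax
          rw [hb, Equiv.swap_apply_left]
          exact (hauto a haA x hx y hy).1 hax
        · by_cases hb' : b = y
          · have hay : a < y := hb' ▸ hab
            have haA : a ∉ A := key' y hy a hay
            rw [hb', Equiv.swap_apply_right]
            exact (hauto a haA y hy x hx).1 hay
          · rw [Equiv.swap_apply_of_ne_of_ne hb hb']
            exact hab
  have hσlt : ∀ a b : α, σ a < σ b ↔ a < b := by
    intro a b
    constructor
    · intro h
      have := hmono _ _ h
      simpa [hσdef] using this
    · exact hmono a b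
  -- greedy preserved
  have hgreedy : ∀ l : List α, IsGreedyLE l → IsGreedyLE (l.map σ) := by
    intro l hl
    have := greedyFrom_map σ hσlt l none Finset.univ hl
    simpa [IsGreedyLE, Finset.image_univ_equiv] using this
  -- index facts
  have hidx : ∀ l : List α, (l.map σ).idxOf x = l.idxOf y ∧ (l.map σ).idxOf y = l.idxOf x := by
    intro l
    constructor
    · have := indexOf_map_of_injective (σ.injective) l y
      rwa [show σ y = x by simp [hσdef]] at this
    · have := indexOf_map_of_injective (σ.injective) l x
      rwa [show σ x = y by simp [hσdef]] at this
  set Sxy := {l : List α | IsGreedyLE l ∧ l.idxOf x < l.idxOf y} with hSxy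
  set Syx := {l : List α | IsGreedyLE l ∧ l.idxOf y < l.idxOf x} with hSyx
  set S := {l : List α | IsGreedyLE l} with hS
  have hmapinj : Function.Injective (List.map σ) := List.map_injective_iff.mpr σ.injective
  have himage : List.map σ '' Sxy = Syx := by
    ext l
    simp only [Set.mem_image, hSxy, hSyx, Set.mem_setOf_eq]
    constructor
    · rintro ⟨m, ⟨hm, hmlt⟩, rfl⟩
      exact ⟨hgreedy m hm, by rw [(hidx m).2, (hidx m).1]; exact hmlt⟩
    · rintro ⟨hl, hlt⟩
      refine ⟨l.map σ, ⟨hgreedy l hl, ?_⟩, ?_⟩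
      · rw [(hidx l).1, (hidx l).2]; exact hlt
      · rw [List.map_map]
        have : σ.toFun ∘ σ.toFun = id := by
          funext z; simp [hσdef]
        simp only [Equiv.toFun_as_coe] at this
        rw [this, List.map_id]
  -- finiteness
  have hSfin : S.Finite := by
    apply Set.Finite.subset (List.finite_length_eq α (Fintype.card α))
    intro l hl
    obtain ⟨hnd, htf⟩ := greedyFrom_nodup_toFinset l none Finset.univ hl
    simp only [Set.mem_setOf_eq]
    rw [← List.toFinset_card_of_nodup hnd, htf, Finset.card_univ]
  have hSxyfin : Sxy.Finite := hSfin.subset (fun l hl => hl.1)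
  have hSyxfin : Syx.Finite := hSfin.subset (fun l hl => hl.1)
  have hdisj : Disjoint Sxy Syx := by
    rw [Set.disjoint_left]
    rintro l ⟨_, h1⟩ ⟨_, h2⟩
    omega
  have hunion : Sxy ∪ Syx = S := by
    ext l
    simp only [Set.mem_union, hSxy, hSyx, hS, Set.mem_setOf_eq]
    constructor
    · rintro (⟨h, _⟩ | ⟨h, _⟩) <;> exact h
    · intro hl
      obtain ⟨hnd, htf⟩ := greedyFrom_nodup_toFinset l none Finset.univ hl
      have hxl : x ∈ l := by rw [← List.mem_toFinset, htf]; exact Finset.mem_univ x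
      have hyl : y ∈ l := by rw [← List.mem_toFinset, htf]; exact Finset.mem_univ y
      have := (List.idxOf_inj (y := y) hxl).not.mpr hxy
      rcases lt_or_gt_of_ne (fun h => this h) with h | h
      · exact Or.inl ⟨hl, h⟩
      · exact Or.inr ⟨hl, h⟩
  have hcardeq : Sxy.ncard = Syx.ncard := by
    rw [← himage, Set.ncard_image_of_injective _ hmapinj]
  rw [two_mul, ← hunion, Set.ncard_union_eq hdisj hSxyfin hSyxfin, hcardeq]
end

section
/- Let P be a finite ordered set (not necessarily N-free) with a minimal element a such that a is not maximal in P and every upper cover of a in P is a minimal element of P ∖ {a}. Then the number of greedy linear extensions of P equals the number of greedy linear extensions of P ∖ {a}: |𝒢(P)| = |𝒢(P ∖ {a})|. -/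
variable {α : Type*}

section Helpers

variable [PartialOrder α] [DecidableEq α]

open Classical in
/-- Insert `a` just before the first element strictly above `a` (at the end if none). -/
noncomputable def insA (a : α) : List α → List α
  | [] => [a]
  | x :: t => if a < x then a :: x :: t else x :: insA a t

theorem greedy_mem_subset :
    ∀ (l : List α) (p : Option α) (s : Finset α),
      GreedyFrom p s l → ∀ x ∈ l, x ∈ s
  | [], _, _, _, x, hx => absurd hx List.not_mem_nil
  | y :: t, p, s, h, x, hx => by
      rcases List.mem_cons.1 hx with rfl | hx
      · exact h.1.1.1
      · exact Finset.mem_of_mem_erase (greedy_mem_subset t (some y) (s.erase y) h.2 x hx)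

theorem cov_of_min_erase {a v : α} {s : Finset α} (hUp : ∀ w, a < w → w ∈ s)
    (hv : IsMinimalIn (s.erase a) v) (hav : a < v) : a ⋖ v :=
  ⟨hav, fun z haz hzv =>
    hv.2 z (Finset.mem_erase.2 ⟨ne_of_gt haz, hUp z haz⟩) hzv⟩

theorem min_of_min_erase {a v : α} {s : Finset α} (hvs : IsMinimalIn (s.erase a) v)
    (h : ¬ a < v) : IsMinimalIn s v := by
  refine ⟨Finset.mem_of_mem_erase hvs.1, fun y hy hyv => ?_⟩
  rcases eq_or_ne y a with rfl | hne
  · exact h hyv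
  · exact hvs.2 y (Finset.mem_erase.2 ⟨hne, hy⟩) hyv

theorem no_force {a q : α} {s : Finset α}
    (hcov : ∀ b : α, a ⋖ b → ∀ u : α, u ≠ a → ¬ u < b)
    (hUp : ∀ w, a < w → w ∈ s) (hq : q ≠ a)
    (h : ¬ ∃ v ∈ s, q < v ∧ IsMinimalIn s v) :
    ¬ ∃ v ∈ s.erase a, q < v ∧ IsMinimalIn (s.erase a) v := by
  rintro ⟨v, hvm, hqv, hvmin⟩
  by_cases hav : a < v
  · exact hcov v (cov_of_min_erase hUp hvmin hav) q hq hqv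
  · exact h ⟨v, Finset.mem_of_mem_erase hvm, hqv, min_of_min_erase hvmin hav⟩

theorem exists_cover_min {a b : α} {s : Finset α}
    (hcov : ∀ b : α, a ⋖ b → ∀ u : α, u ≠ a → ¬ u < b)
    (hUp : ∀ w, a < w → w ∈ s) (hab : a < b) :
    ∃ v ∈ s.erase a, a < v ∧ IsMinimalIn (s.erase a) v := by
  classical
  set F := (s.erase a).filter (fun v => a < v) with hF
  have hbF : b ∈ F :=
    Finset.mem_filter.2 ⟨Finset.mem_erase.2 ⟨ne_of_gt hab, hUp b hab⟩, hab⟩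
  obtain ⟨v, hvF, hvmin'⟩ := Finset.exists_minimal (s := F) ⟨b, hbF⟩
  have hvmin : ∀ x ∈ F, ¬ x < v := fun x hx hxv => hxv.not_ge (hvmin' hx hxv.le)
  have hv1 : v ∈ s.erase a := (Finset.mem_filter.1 hvF).1
  have hav : a < v := (Finset.mem_filter.1 hvF).2
  have hcv : a ⋖ v := ⟨hav, fun z haz hzv =>
    hvmin z (Finset.mem_filter.2 ⟨Finset.mem_erase.2 ⟨ne_of_gt haz, hUp z haz⟩, haz⟩) hzv⟩
  exact ⟨v, hv1, hav, hv1, fun y hy hyv =>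
    hcov v hcv y (Finset.mem_erase.1 hy).1 hyv⟩

variable {a b₀ : α}

/-- Deleting `a` from a greedy enumeration yields a greedy enumeration of `s.erase a`. -/
theorem greedy_erase (hmin : IsMin a)
    (hcov : ∀ b : α, a ⋖ b → ∀ u : α, u ≠ a → ¬ u < b) (hb : a < b₀)
    (l : List α) : ∀ (p : Option α) (s : Finset α),
      GreedyFrom p s l → a ∈ s → (∀ w, a < w → w ∈ s) →
      (∀ q, p = some q → q ≠ a) → GreedyFrom p (s.erase a) (l.erase a) := by
  induction l with
  | nil =>
    intro p s h ha _ _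
    have hs : s = ∅ := h
    exact absurd (hs ▸ ha) (Finset.notMem_empty a)
  | cons x t ih =>
    intro p s h ha hUp hp
    obtain ⟨hnx, hrest⟩ := h
    by_cases hxa : x = a
    · subst hxa
      rw [List.erase_cons_head]
      cases t with
      | nil =>
        exfalso
        have h0 : s.erase x = ∅ := hrest
        have : b₀ ∈ s.erase x := Finset.mem_erase.2 ⟨ne_of_gt hb, hUp b₀ hb⟩
        rw [h0] at this
        exact Finset.notMem_empty b₀ this
      | cons y t₂ =>
        obtain ⟨hny, hrest₂⟩ := hrest
        refine ⟨⟨hny.1, ?_⟩, hrest₂⟩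
        intro q hq hex
        exfalso
        have hqa : q ≠ x := hp q hq
        have hnf : ¬ ∃ v ∈ s, q < v ∧ IsMinimalIn s v := fun hex' =>
          hmin.not_lt (hnx.2 q hq hex')
        exact no_force hcov hUp hqa hnf hex
    · have hax : ¬ a < x := fun h' => hnx.1.2 a ha h'
      rw [List.erase_cons_tail (by simpa using hxa)]
      refine ⟨⟨⟨Finset.mem_erase.2 ⟨hxa, hnx.1.1⟩,
          fun y hy => hnx.1.2 y (Finset.mem_of_mem_erase hy)⟩, ?_⟩, ?_⟩
      · intro q hq hex
        obtain ⟨v, hv, hqv, hvm⟩ := hex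
        by_cases hav : a < v
        · exact absurd hqv (hcov v (cov_of_min_erase hUp hvm hav) q (hp q hq))
        · exact hnx.2 q hq ⟨v, Finset.mem_of_mem_erase hv, hqv, min_of_min_erase hvm hav⟩
      · rw [Finset.erase_right_comm]
        refine ih (some x) (s.erase x) hrest
          (Finset.mem_erase.2 ⟨fun e => hxa e.symm, ha⟩)
          (fun w hw => Finset.mem_erase.2 ⟨fun e => hax (e ▸ hw), hUp w hw⟩)
          (fun q hq => by injection hq with hq; exact hq ▸ hxa)

/-- Inserting `a` (via `insA`) into a greedy enumeration of `s.erase a`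
yields a greedy enumeration of `s`. -/
theorem greedy_insA (hmin : IsMin a)
    (hcov : ∀ b : α, a ⋖ b → ∀ u : α, u ≠ a → ¬ u < b) (hb : a < b₀)
    (m : List α) : ∀ (p : Option α) (s : Finset α),
      GreedyFrom p (s.erase a) m → a ∈ s → (∀ w, a < w → w ∈ s) →
      (∀ q, p = some q → q ≠ a) → GreedyFrom p s (insA a m) := by
  induction m with
  | nil =>
    intro p s h ha hUp _
    exfalso
    have h0 : s.erase a = ∅ := h
    have : b₀ ∈ s.erase a := Finset.mem_erase.2 ⟨ne_of_gt hb, hUp b₀ hb⟩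
    rw [h0] at this
    exact Finset.notMem_empty b₀ this
  | cons x t ih =>
    intro p s h ha hUp hp
    obtain ⟨hnx, hrest⟩ := h
    have hxs : x ∈ s := Finset.mem_of_mem_erase hnx.1.1
    have hxa : x ≠ a := (Finset.mem_erase.1 hnx.1.1).1
    by_cases hax : a < x
    · rw [show insA a (x :: t) = a :: x :: t by rw [insA, if_pos hax]]
      have hcvx : a ⋖ x := cov_of_min_erase hUp hnx.1 hax
      refine ⟨⟨⟨ha, fun y _ => hmin.not_lt⟩, ?_⟩, ⟨hnx.1, fun q hq _ => by
        injection hq with hq; exact hq ▸ hax⟩, hrest⟩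
      intro q hq hex
      exfalso
      have hqa : q ≠ a := hp q hq
      obtain ⟨v, hvs, hqv, hvm⟩ := hex
      have hva : v ≠ a := fun e => hmin.not_lt (e ▸ hqv)
      have : q < x := hnx.2 q hq ⟨v, Finset.mem_erase.2 ⟨hva, hvs⟩, hqv,
        ⟨Finset.mem_erase.2 ⟨hva, hvs⟩, fun y hy => hvm.2 y (Finset.mem_of_mem_erase hy)⟩⟩
      exact hcov x hcvx q hqa this
    · rw [show insA a (x :: t) = x :: insA a t by rw [insA, if_neg hax]]
      refine ⟨⟨⟨hxs, fun y hy hyx => ?_⟩, fun q hq hex => ?_⟩, ?_⟩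
      · rcases eq_or_ne y a with rfl | hya
        · exact hax hyx
        · exact hnx.1.2 y (Finset.mem_erase.2 ⟨hya, hy⟩) hyx
      · obtain ⟨v, hvs, hqv, hvm⟩ := hex
        have hva : v ≠ a := fun e => hmin.not_lt (e ▸ hqv)
        exact hnx.2 q hq ⟨v, Finset.mem_erase.2 ⟨hva, hvs⟩, hqv,
          ⟨Finset.mem_erase.2 ⟨hva, hvs⟩, fun y hy => hvm.2 y (Finset.mem_of_mem_erase hy)⟩⟩
      · refine ih (some x) (s.erase x) ?_ (Finset.mem_erase.2 ⟨fun e => hxa e.symm, ha⟩)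
          (fun w hw => Finset.mem_erase.2 ⟨fun e => hax (e ▸ hw), hUp w hw⟩)
          (fun q hq => by injection hq with hq; exact hq ▸ hxa)
        rw [Finset.erase_right_comm]
        exact hrest

/-- Round trip: re-inserting `a` after deleting it recovers a greedy list. -/
theorem insA_erase_eq (hcov : ∀ b : α, a ⋖ b → ∀ u : α, u ≠ a → ¬ u < b) (hb : a < b₀)
    (l : List α) : ∀ (p : Option α) (s : Finset α),
      GreedyFrom p s l → a ∈ s → (∀ w, a < w → w ∈ s) →
      insA a (l.erase a) = l := by
  induction l with
  | nil =>
    intro p s h ha _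
    have hs : s = ∅ := h
    exact absurd (hs ▸ ha) (Finset.notMem_empty a)
  | cons x t ih =>
    intro p s h ha hUp
    obtain ⟨hnx, hrest⟩ := h
    by_cases hxa : x = a
    · subst hxa
      rw [List.erase_cons_head]
      cases t with
      | nil =>
        exfalso
        have h0 : s.erase x = ∅ := hrest
        have : b₀ ∈ s.erase x := Finset.mem_erase.2 ⟨ne_of_gt hb, hUp b₀ hb⟩
        rw [h0] at this
        exact Finset.notMem_empty b₀ this
      | cons y t₂ =>
        obtain ⟨hny, _⟩ := hrest
        have hay : x < y := hny.2 x rfl (exists_cover_min hcov hUp hb)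
        rw [insA, if_pos hay]
    · have hax : ¬ a < x := fun h' => hnx.1.2 a ha h'
      rw [List.erase_cons_tail (by simpa using hxa), insA, if_neg hax]
      rw [ih (some x) (s.erase x) hrest
        (Finset.mem_erase.2 ⟨fun e => hxa e.symm, ha⟩)
        (fun w hw => Finset.mem_erase.2 ⟨fun e => hax (e ▸ hw), hUp w hw⟩)]

theorem erase_insA_eq {a : α} (m : List α) (hm : a ∉ m) : (insA a m).erase a = m := by
  induction m with
  | nil => simp [insA]
  | cons x t ih =>
    by_cases hax : a < x
    · rw [insA, if_pos hax, List.erase_cons_head]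
    · have hxa : x ≠ a := fun e => hm (e ▸ (List.mem_cons_self : x ∈ x :: t))
      rw [insA, if_neg hax, List.erase_cons_tail (by simpa using hxa),
        ih (fun h => hm (List.mem_cons_of_mem x h))]

theorem isMinimalIn_map {a : α} (s' : Finset {z : α // z ≠ a}) (x : {z : α // z ≠ a}) :
    IsMinimalIn (s'.map (Function.Embedding.subtype _)) x.val ↔ IsMinimalIn s' x := by
  constructor
  · rintro ⟨hx, hmin⟩
    refine ⟨(Finset.mem_map' _).1 hx, fun y hy hyx => ?_⟩
    exact hmin y.val ((Finset.mem_map' _).2 hy) (Subtype.coe_lt_coe.2 hyx)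
  · rintro ⟨hx, hmin⟩
    refine ⟨(Finset.mem_map' _).2 hx, fun w hw hwx => ?_⟩
    obtain ⟨y, hy, rfl⟩ := Finset.mem_map.1 hw
    exact hmin y hy (Subtype.coe_lt_coe.1 hwx)

theorem greedyNext_map {a : α} (p' : Option {z : α // z ≠ a})
    (s' : Finset {z : α // z ≠ a}) (x : {z : α // z ≠ a}) :
    GreedyNext p' s' x ↔
      GreedyNext (p'.map Subtype.val) (s'.map (Function.Embedding.subtype _)) x.val := by
  have hex : (∀ q, p' = some q → (∃ v ∈ s', q < v ∧ IsMinimalIn s' v) → q < x) ↔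
      (∀ w, p'.map Subtype.val = some w →
        (∃ v ∈ s'.map (Function.Embedding.subtype _), w < v ∧
          IsMinimalIn (s'.map (Function.Embedding.subtype _)) v) → w < x.val) := by
    cases p' with
    | none => simp
    | some q =>
      simp only [Option.map_some, Option.some.injEq]
      constructor
      · rintro h w rfl ⟨v, hv, hqv, hvm⟩
        obtain ⟨v', hv', rfl⟩ := Finset.mem_map.1 hv
        exact Subtype.coe_lt_coe.2 <| h q rfl
          ⟨v', hv', Subtype.coe_lt_coe.1 hqv, (isMinimalIn_map s' v').1 hvm⟩
      · rintro h q' rfl ⟨v, hv, hqv, hvm⟩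
        exact Subtype.coe_lt_coe.1 <| h q.val rfl
          ⟨v.val, (Finset.mem_map' _).2 hv, Subtype.coe_lt_coe.2 hqv,
            (isMinimalIn_map s' v).2 hvm⟩
  unfold GreedyNext
  rw [isMinimalIn_map, hex]

theorem greedy_map_subtype {a : α} :
    ∀ (l' : List {z : α // z ≠ a}) (p' : Option {z : α // z ≠ a})
      (s' : Finset {z : α // z ≠ a}),
      GreedyFrom p' s' l' ↔
        GreedyFrom (p'.map Subtype.val) (s'.map (Function.Embedding.subtype _))
          (l'.map Subtype.val)
  | [], p', s' => by
      simp only [List.map_nil]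
      show s' = ∅ ↔ s'.map _ = ∅
      simp [Finset.map_eq_empty]
  | x :: t, p', s' => by
      simp only [List.map_cons]
      show _ ∧ _ ↔ _ ∧ _
      rw [greedyNext_map, greedy_map_subtype t (some x) (s'.erase x),
        Finset.map_erase]
      rfl

end Helpers

/-- Let `P` be a finite ordered set with a minimal element `a` which is not maximal and
such that every upper cover of `a` is minimal in `P ∖ {a}`.  Then `P` and `P ∖ {a}` have
the same number of greedy linear extensions. -/
theorem card_greedy_erase_min [Fintype α] [DecidableEq α] [PartialOrder α]
    (a : α) (hmin : IsMin a) (hmax : ¬ IsMax a)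
    (hcov : ∀ b : α, a ⋖ b → ∀ u : α, u ≠ a → ¬ u < b) :
    {l : List α | IsGreedyLE l}.ncard =
      {l : List {z : α // z ≠ a} | IsGreedyLE l}.ncard := by
  classical
  obtain ⟨b₀, hb⟩ := not_isMax_iff.1 hmax
  set T : Set (List α) := {m | GreedyFrom (none : Option α) (Finset.univ.erase a) m} with hT
  -- Step 1 : {l | IsGreedyLE l}.ncard = T.ncard
  have himg1 : (fun l => l.erase a) '' {l : List α | IsGreedyLE l} = T := by
    ext m
    constructor
    · rintro ⟨l, hl, rfl⟩
      exact greedy_erase hmin hcov hb l none Finset.univ hl (Finset.mem_univ a)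
        (fun w _ => Finset.mem_univ w) (fun q hq => by exact absurd hq (by simp))
    · intro hm
      refine ⟨insA a m, ?_, ?_⟩
      · exact greedy_insA hmin hcov hb m none Finset.univ hm (Finset.mem_univ a)
          (fun w _ => Finset.mem_univ w) (fun q hq => by exact absurd hq (by simp))
      · refine erase_insA_eq m (fun hma => ?_)
        have := greedy_mem_subset m none (Finset.univ.erase a) hm a hma
        simp at this
  have hinj1 : Set.InjOn (fun l => l.erase a) {l : List α | IsGreedyLE l} := by
    intro l1 h1 l2 h2 he
    have r1 := insA_erase_eq hcov hb l1 none Finset.univ h1 (Finset.mem_univ a)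
      (fun w _ => Finset.mem_univ w)
    have r2 := insA_erase_eq hcov hb l2 none Finset.univ h2 (Finset.mem_univ a)
      (fun w _ => Finset.mem_univ w)
    rw [← r1, ← r2]
    simpa using congrArg (insA a) he
  have h1 : {l : List α | IsGreedyLE l}.ncard = T.ncard := by
    rw [← himg1, Set.ncard_image_of_injOn hinj1]
  -- Step 2 : subtype side
  have hUnivMap : (Finset.univ : Finset {z : α // z ≠ a}).map (Function.Embedding.subtype _)
      = Finset.univ.erase a := by
    ext x
    simp [Finset.mem_map, Finset.mem_erase, Function.Embedding.subtype]
    constructor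
    · rintro ⟨y, hy, rfl⟩
      exact hy
    · intro h
      exact ⟨x, h, rfl⟩
  have himg2 : (List.map (Subtype.val : {z : α // z ≠ a} → α)) ''
      {l : List {z : α // z ≠ a} | IsGreedyLE l} = T := by
    ext m
    constructor
    · rintro ⟨l', hl', rfl⟩
      have := (greedy_map_subtype l' none Finset.univ).1 hl'
      rwa [Option.map_none, hUnivMap] at this
    · intro hm
      have hma : ∀ x ∈ m, x ≠ a := fun x hx =>
        (Finset.mem_erase.1 (greedy_mem_subset m none (Finset.univ.erase a) hm x hx)).1
      refine ⟨m.attach.map (fun x => ⟨x.1, hma x.1 x.2⟩), ?_, ?_⟩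
      · apply (greedy_map_subtype _ none Finset.univ).2
        rw [Option.map_none, hUnivMap]
        have : (m.attach.map (fun x => (⟨x.1, hma x.1 x.2⟩ : {z : α // z ≠ a}))).map
            Subtype.val = m := by
          rw [List.map_map]
          exact List.attach_map_subtype_val m
        rw [this]
        exact hm
      · rw [List.map_map]
        exact List.attach_map_subtype_val m
  have hinj2 : Set.InjOn (List.map (Subtype.val : {z : α // z ≠ a} → α))
      {l : List {z : α // z ≠ a} | IsGreedyLE l} :=
    (List.map_injective_iff.2 Subtype.val_injective).injOn
  have h2 : {l : List {z : α // z ≠ a} | IsGreedyLE l}.ncard = T.ncard := by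
    rw [← himg2, Set.ncard_image_of_injOn hinj2]
  rw [h1, h2]
end
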